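/- There exists a universal constant C such that for any finite irreducible reversible chain P, if λ satisfies 1/λ ≥ 100·t_cov, then the expected cover time t_cov^λ of the auxiliary chain P^λ on V ∪ {∂} satisfies t_cov^λ ≤ C/λ. -/

import Mathlib

open scoped BigOperators

/- `pathSum P x t A`: probability, for the chain with transition matrix `P` started
at `x`, of the event `A` about the first `t+1` positions of the trajectory. -/
open Classical in
noncomputable def pathSum {S : Type*} [Fintype S] (P : S → S → ℝ) (x : S) (t : ℕ)
    (A : (Fin (t+1) → S) → Prop) : ℝ :=
  ∑ w : Fin (t+1) → S,
    if w 0 = x ∧ A w then ∏ i : Fin t, P (w i.castSucc) (w i.succ) else 0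

/-- `P_x(τ_cov > t)`: the chain started at `x` has not visited every state by time `t`. -/
noncomputable def coverTail {S : Type*} [Fintype S] (P : S → S → ℝ) (x : S) (t : ℕ) : ℝ :=
  pathSum P x t (fun w => ¬ ∀ v : S, ∃ i, w i = v)

/-- `E_x[τ_cov]`, the expected cover time started from `x`. -/
noncomputable def expCov {S : Type*} [Fintype S] (P : S → S → ℝ) (x : S) : ℝ :=
  ∑' t : ℕ, coverTail P x t

/-- `t_cov = max_x E_x[τ_cov]`. -/
noncomputable def tcov {S : Type*} [Fintype S] [Nonempty S] (P : S → S → ℝ) : ℝ :=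
  ⨆ x : S, expCov P x

/-- The auxiliary transition matrix `P^λ` on `V ∪ {∂}`, where `∂` is modelled by
`none : Option V`. -/
def Plam {V : Type*} (P : V → V → ℝ) (π : V → ℝ) (lam : ℝ) :
    Option V → Option V → ℝ
  | some x, some y => (1 - lam) * P x y
  | some _, none => lam
  | none, some y => π y
  | none, none => 0

section Basics

variable {S : Type*} [Fintype S] (R : S → S → ℝ)

lemma pathSum_nonneg (hR0 : ∀ x y, 0 ≤ R x y) (x : S) (t : ℕ)
    (A : (Fin (t+1) → S) → Prop) : 0 ≤ pathSum R x t A := by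
  classical
  unfold pathSum
  apply Finset.sum_nonneg
  intro w _
  split_ifs
  · exact Finset.prod_nonneg fun i _ => hR0 _ _
  · exact le_rfl

lemma pathSum_congr {x : S} {t : ℕ} {A B : (Fin (t+1) → S) → Prop}
    (h : ∀ w, w 0 = x → (A w ↔ B w)) : pathSum R x t A = pathSum R x t B := by
  classical
  unfold pathSum
  refine Finset.sum_congr rfl fun w _ => ?_
  by_cases hw : w 0 = x
  · by_cases hA : A w
    · rw [if_pos ⟨hw, hA⟩, if_pos ⟨hw, (h w hw).1 hA⟩]
    · rw [if_neg (fun c => hA c.2), if_neg (fun c => hA ((h w hw).2 c.2))]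
  · rw [if_neg (fun c => hw c.1), if_neg (fun c => hw c.1)]

lemma pathSum_mono (hR0 : ∀ x y, 0 ≤ R x y) {x : S} {t : ℕ}
    {A B : (Fin (t+1) → S) → Prop} (h : ∀ w, w 0 = x → A w → B w) :
    pathSum R x t A ≤ pathSum R x t B := by
  classical
  unfold pathSum
  refine Finset.sum_le_sum fun w _ => ?_
  by_cases hw : w 0 = x ∧ A w
  · rw [if_pos hw, if_pos ⟨hw.1, h w hw.1 hw.2⟩]
  · rw [if_neg hw]
    split_ifs
    · exact Finset.prod_nonneg fun i _ => hR0 _ _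
    · exact le_rfl

lemma pathSum_false (x : S) (t : ℕ) {A : (Fin (t+1) → S) → Prop}
    (h : ∀ w, w 0 = x → ¬ A w) : pathSum R x t A = 0 := by
  classical
  unfold pathSum
  refine Finset.sum_eq_zero fun w _ => ?_
  rw [if_neg (fun c => h w c.1 c.2)]

open Classical in
lemma pathSum_zero (x : S) (A : (Fin 1 → S) → Prop) :
    pathSum R x 0 A = if A (fun _ => x) then 1 else 0 := by
  classical
  unfold pathSum
  rw [← Equiv.sum_comp (Equiv.funUnique (Fin 1) S).symm
      (fun w => if w 0 = x ∧ A w then ∏ i : Fin 0, R (w i.castSucc) (w i.succ) else 0)]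
  have hc : ∀ c : S, ((Equiv.funUnique (Fin 1) S).symm c) = fun _ : Fin 1 => c :=
    fun _ => rfl
  simp only [hc, Fin.prod_univ_zero]
  rw [Finset.sum_eq_single x (fun c _ hc2 => by
        exact if_neg (fun h => hc2 h.1))
      (fun h => absurd (Finset.mem_univ x) h)]
  by_cases h2 : A (fun _ => x) <;> simp [h2]

omit [Fintype S] in
lemma cons_prod {t : ℕ} (y : S) (v : Fin (t+1) → S) :
    (∏ i : Fin (t+1), R ((Fin.cons y v : Fin (t+2) → S) i.castSucc)
      ((Fin.cons y v : Fin (t+2) → S) i.succ))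
    = R y (v 0) * ∏ i : Fin t, R (v i.castSucc) (v i.succ) := by
  rw [Fin.prod_univ_succ]
  simp only [Fin.castSucc_zero, Fin.cons_zero, Fin.cons_succ, ← Fin.succ_castSucc]

lemma pathSum_succ (x : S) (t : ℕ) (A : (Fin (t+2) → S) → Prop) :
    pathSum R x (t+1) A = ∑ y, R x y * pathSum R y t (fun w => A (Fin.cons x w)) := by
  classical
  unfold pathSum
  rw [← Equiv.sum_comp (Fin.consEquiv (fun _ : Fin (t+2) => S))
      (fun w => if w 0 = x ∧ A w then
        ∏ i : Fin (t+1), R (w i.castSucc) (w i.succ) else 0)]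
  rw [Fintype.sum_prod_type]
  have he : ∀ (y : S) (v : Fin (t+1) → S),
      (Fin.consEquiv (fun _ : Fin (t+2) => S)) (y, v) = Fin.cons y v := fun _ _ => rfl
  simp only [he]
  have lhs_eq : ∀ y : S, (∑ v : Fin (t+1) → S,
      if (Fin.cons y v : Fin (t+2) → S) 0 = x ∧ A (Fin.cons y v) then
        ∏ i : Fin (t+1), R ((Fin.cons y v : Fin (t+2) → S) i.castSucc)
          ((Fin.cons y v : Fin (t+2) → S) i.succ) else 0)
      = ∑ v : Fin (t+1) → S, (if y = x ∧ A (Fin.cons y v) then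
          R y (v 0) * ∏ i : Fin t, R (v i.castSucc) (v i.succ) else 0) := by
    intro y
    refine Finset.sum_congr rfl fun v _ => ?_
    rw [cons_prod]
    congr 1
  simp only [lhs_eq]
  rw [Finset.sum_eq_single x (fun y _ hy => Finset.sum_eq_zero fun v _ =>
      if_neg (fun h => hy h.1)) (fun h => absurd (Finset.mem_univ x) h)]
  have rhs_eq : ∀ y : S, (R x y * ∑ v : Fin (t+1) → S,
      (if v 0 = y ∧ A (Fin.cons x v) then
        ∏ i : Fin t, R (v i.castSucc) (v i.succ) else 0))
      = ∑ v : Fin (t+1) → S, (if v 0 = y ∧ A (Fin.cons x v) then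
          R x (v 0) * ∏ i : Fin t, R (v i.castSucc) (v i.succ) else 0) := by
    intro y
    rw [Finset.mul_sum]
    refine Finset.sum_congr rfl fun v _ => ?_
    by_cases h : v 0 = y ∧ A (Fin.cons x v)
    · rw [if_pos h, if_pos h, h.1]
    · rw [if_neg h, if_neg h, mul_zero]
  simp only [rhs_eq]
  rw [Finset.sum_comm]
  refine Finset.sum_congr rfl fun v _ => ?_
  rw [Finset.sum_eq_single (v 0) (fun y _ hy => if_neg (fun h => hy h.1.symm))
      (fun h => absurd (Finset.mem_univ (v 0)) h)]
  by_cases h : A (Fin.cons x v) <;> simp [h]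

lemma pathSum_true (hR1 : ∀ x, ∑ y, R x y = 1) (x : S) (t : ℕ) :
    pathSum R x t (fun _ => True) = 1 := by
  induction t generalizing x with
  | zero => rw [pathSum_zero]; simp
  | succ t ih =>
    rw [pathSum_succ]
    simp only [ih]
    simp [hR1 x]

lemma pathSum_le_one (hR0 : ∀ x y, 0 ≤ R x y) (hR1 : ∀ x, ∑ y, R x y = 1)
    (x : S) (t : ℕ) (A : (Fin (t+1) → S) → Prop) : pathSum R x t A ≤ 1 := by
  calc pathSum R x t A ≤ pathSum R x t (fun _ => True) :=
        pathSum_mono R hR0 (fun _ _ _ => trivial)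
    _ = 1 := pathSum_true R hR1 x t

lemma pathSum_sum_last (x : S) (t : ℕ) (A : (Fin (t+1) → S) → Prop) :
    ∑ y, pathSum R x t (fun w => A w ∧ w (Fin.last t) = y) = pathSum R x t A := by
  classical
  unfold pathSum
  rw [Finset.sum_comm]
  refine Finset.sum_congr rfl fun w _ => ?_
  beta_reduce
  refine (Finset.sum_eq_single_of_mem (w (Fin.last t)) (Finset.mem_univ _)
      (fun y _ hy => if_neg fun c => hy c.2.2.symm)).trans ?_
  by_cases h2 : w 0 = x ∧ A w
  · rw [if_pos ⟨h2.1, h2.2, rfl⟩, if_pos h2]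
  · rw [if_neg (fun c => h2 ⟨c.1, c.2.1⟩), if_neg h2]

lemma pathSum_union_le {ι : Type*} (hR0 : ∀ x y, 0 ≤ R x y) (x : S) (t : ℕ)
    (s : Finset ι) (C : ι → (Fin (t+1) → S) → Prop) :
    pathSum R x t (fun w => ∃ i ∈ s, C i w) ≤ ∑ i ∈ s, pathSum R x t (C i) := by
  classical
  unfold pathSum
  rw [Finset.sum_comm]
  refine Finset.sum_le_sum fun w _ => ?_
  by_cases h : w 0 = x ∧ ∃ i ∈ s, C i w
  · obtain ⟨hw, i, hi, hC⟩ := h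
    rw [if_pos ⟨hw, i, hi, hC⟩]
    have hnn : ∀ j ∈ s, (0:ℝ) ≤ (fun i => if w 0 = x ∧ C i w then
        ∏ j : Fin t, R (w j.castSucc) (w j.succ) else 0) j := by
      intro j _
      have h3 : (0:ℝ) ≤ if w 0 = x ∧ C j w then
          ∏ j : Fin t, R (w j.castSucc) (w j.succ) else 0 := by
        split_ifs
        · exact Finset.prod_nonneg fun j _ => hR0 _ _
        · exact le_rfl
      exact h3
    have h2 := Finset.single_le_sum hnn hi
    beta_reduce at h2
    rw [if_pos ⟨hw, hC⟩] at h2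
    exact h2
  · rw [if_neg h]
    refine Finset.sum_nonneg fun i _ => ?_
    split_ifs
    · exact Finset.prod_nonneg fun j _ => hR0 _ _
    · exact le_rfl

lemma pathSum_compl (x : S) (t : ℕ) (A : (Fin (t+1) → S) → Prop) :
    pathSum R x t A + pathSum R x t (fun w => ¬ A w) = pathSum R x t (fun _ => True) := by
  classical
  unfold pathSum
  rw [← Finset.sum_add_distrib]
  refine Finset.sum_congr rfl fun w _ => ?_
  by_cases hw : w 0 = x
  · by_cases hA : A w
    · rw [if_pos ⟨hw, hA⟩, if_neg (fun c => c.2 hA), if_pos ⟨hw, trivial⟩, add_zero]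
    · rw [if_neg (fun c => hA c.2), if_pos ⟨hw, hA⟩, if_pos ⟨hw, trivial⟩, zero_add]
  · rw [if_neg (fun c => hw c.1), if_neg (fun c => hw c.1), if_neg (fun c => hw c.1),
      add_zero]

lemma pathSum_split (x : S) (s t : ℕ)
    (A₁ : (Fin (s+1) → S) → Prop) (A₂ : (Fin (t+1) → S) → Prop) :
    pathSum R x (t + s) (fun w =>
        A₁ (fun i => w (Fin.castLE (by omega) i)) ∧
        A₂ (fun j => w (⟨s + j.1, by omega⟩ : Fin (t + s + 1)))) =
    ∑ y, pathSum R x s (fun u => A₁ u ∧ u (Fin.last s) = y) * pathSum R y t A₂ := by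
  induction s generalizing x with
  | zero =>
    have h1 : ∀ w : Fin (t+1) → S, w 0 = x →
        ((fun i : Fin 1 => w (Fin.castLE (by omega) i)) = fun _ => x) := by
      intro w hw
      funext i
      have : (Fin.castLE (by omega) i : Fin (t+1)) = 0 := by
        apply Fin.ext
        simp [Fin.val_eq_zero i]
      rw [this, hw]
    have h2 : ∀ w : Fin (t+1) → S,
        ((fun j : Fin (t+1) => w (⟨0 + j.1, by omega⟩ : Fin (t+1))) = w) := by
      intro w
      funext j
      congr 1
      apply Fin.ext
      simp
    have hL : pathSum R x (t + 0) (fun w =>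
        A₁ (fun i => w (Fin.castLE (by omega) i)) ∧
        A₂ (fun j => w (⟨0 + j.1, by omega⟩ : Fin (t + 0 + 1)))) =
        pathSum R x t (fun w => A₁ (fun _ => x) ∧ A₂ w) := by
      refine pathSum_congr R fun w hw => ?_
      rw [h1 w hw, h2 w]
    rw [hL]
    by_cases hA : A₁ (fun _ => x)
    · have hL2 : pathSum R x t (fun w => A₁ (fun _ => x) ∧ A₂ w) = pathSum R x t A₂ :=
        pathSum_congr R fun w hw => by simp [hA]
      rw [hL2]
      refine Eq.trans ?_ (Finset.sum_eq_single_of_mem x (Finset.mem_univ x)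
        (fun y _ hy => by
          rw [pathSum_zero, if_neg (fun c => hy c.2.symm), zero_mul])).symm
      rw [pathSum_zero, if_pos ⟨hA, rfl⟩, one_mul]
    · have hL2 : pathSum R x t (fun w => A₁ (fun _ => x) ∧ A₂ w) = 0 :=
        pathSum_false R x t (fun w hw c => hA c.1)
      rw [hL2]
      refine (Finset.sum_eq_zero fun y _ => ?_).symm
      rw [pathSum_zero, if_neg (fun c => hA c.1), zero_mul]
  | succ s ih =>
    have key : ∀ (w : Fin (t + s + 1) → S),
        (fun i : Fin (s+2) => (Fin.cons x w : Fin (t+s+2) → S) (Fin.castLE (by omega) i))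
          = Fin.cons x (fun i : Fin (s+1) => w (Fin.castLE (by omega) i)) := by
      intro w
      funext i
      refine Fin.cases ?_ (fun k => ?_) i
      · rfl
      · have e1 : (Fin.castLE (by omega) k.succ : Fin (t+s+2))
            = (Fin.castLE (by omega) k : Fin (t+s+1)).succ := by
          apply Fin.ext
          simp
        rw [e1, Fin.cons_succ, Fin.cons_succ]
    have key2 : ∀ (w : Fin (t + s + 1) → S),
        (fun j : Fin (t+1) => (Fin.cons x w : Fin (t+s+2) → S) (⟨s + 1 + j.1, by omega⟩ : Fin (t+(s+1)+1)))
          = (fun j : Fin (t+1) => w (⟨s + j.1, by omega⟩ : Fin (t+s+1))) := by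
      intro w
      funext j
      have e1 : (⟨s + 1 + j.1, by omega⟩ : Fin (t+(s+1)+1))
          = (⟨s + j.1, by omega⟩ : Fin (t+s+1)).succ := by
        apply Fin.ext
        simp
        omega
      rw [e1, Fin.cons_succ]
    have hstep := pathSum_succ R x (t+s) (fun w : Fin (t+s+2) → S =>
        A₁ (fun i => w (Fin.castLE (by omega) i)) ∧
        A₂ (fun j => w (⟨s + 1 + j.1, by omega⟩ : Fin (t+s+2))))
    refine hstep.trans ?_
    refine (Finset.sum_congr rfl fun y _ => congrArg (R x y * ·)
      ((pathSum_congr R fun w hw => by rw [key w, key2 w]).trans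
        (ih y (fun u => A₁ (Fin.cons x u))))).trans ?_
    refine Eq.symm ?_
    refine (Finset.sum_congr rfl fun z _ => congrArg (· * pathSum R z t A₂)
      ((pathSum_succ R x s _).trans (Finset.sum_congr rfl fun y _ =>
        congrArg (R x y * ·) (pathSum_congr R fun u hu => by
          rw [show (Fin.cons x u : Fin (s+2) → S) (Fin.last (s+1)) = u (Fin.last s) from by
            rw [← Fin.succ_last, Fin.cons_succ]])))).trans ?_
    simp only [Finset.sum_mul, Finset.mul_sum]
    rw [Finset.sum_comm]
    refine Finset.sum_congr rfl fun z _ => Finset.sum_congr rfl fun y _ => by ring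

lemma pathSum_prefix (hR1 : ∀ x, ∑ y, R x y = 1) (x : S) (s t : ℕ)
    (A₁ : (Fin (s+1) → S) → Prop) :
    pathSum R x (t + s) (fun w => A₁ (fun i => w (Fin.castLE (by omega) i)))
      = pathSum R x s A₁ := by
  calc pathSum R x (t + s) (fun w => A₁ (fun i => w (Fin.castLE (by omega) i)))
      = pathSum R x (t + s) (fun w =>
          A₁ (fun i => w (Fin.castLE (by omega) i)) ∧
          (fun _ : Fin (t+1) → S => True) (fun j => w (⟨s + j.1, by omega⟩ : Fin (t+s+1)))) :=
        pathSum_congr R fun w hw => by simp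
    _ = ∑ y, pathSum R x s (fun u => A₁ u ∧ u (Fin.last s) = y)
          * pathSum R y t (fun _ => True) := pathSum_split R x s t A₁ (fun _ : Fin (t+1) → S => True)
    _ = ∑ y, pathSum R x s (fun u => A₁ u ∧ u (Fin.last s) = y) := by
        refine Finset.sum_congr rfl fun y _ => by rw [pathSum_true R hR1, mul_one]
    _ = pathSum R x s A₁ := pathSum_sum_last R x s A₁

end Basics

section Cover

variable {S : Type*} [Fintype S] [Nonempty S] (R : S → S → ℝ)

noncomputable def Mc (t : ℕ) : ℝ := ⨆ y : S, coverTail R y t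

lemma coverTail_nonneg (hR0 : ∀ x y, 0 ≤ R x y) (x : S) (t : ℕ) :
    0 ≤ coverTail R x t :=
  pathSum_nonneg R hR0 x t _

lemma coverTail_le_one (hR0 : ∀ x y, 0 ≤ R x y) (hR1 : ∀ x, ∑ y, R x y = 1)
    (x : S) (t : ℕ) : coverTail R x t ≤ 1 :=
  pathSum_le_one R hR0 hR1 x t _

lemma le_Mc (y : S) (t : ℕ) : coverTail R y t ≤ Mc R t := by
  unfold Mc
  exact le_ciSup (f := fun y : S => coverTail R y t)
    (Set.Finite.bddAbove (Set.finite_range _)) y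

lemma Mc_le {c : ℝ} {t : ℕ} (h : ∀ y : S, coverTail R y t ≤ c) : Mc R t ≤ c := by
  unfold Mc
  exact ciSup_le h

lemma Mc_nonneg (hR0 : ∀ x y, 0 ≤ R x y) (t : ℕ) : 0 ≤ Mc R t :=
  le_trans (coverTail_nonneg R hR0 (Classical.arbitrary S) t) (le_Mc R _ t)

lemma Mc_le_one (hR0 : ∀ x y, 0 ≤ R x y) (hR1 : ∀ x, ∑ y, R x y = 1) (t : ℕ) :
    Mc R t ≤ 1 :=
  Mc_le R fun y => coverTail_le_one R hR0 hR1 y t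

lemma coverTail_mono (hR0 : ∀ x y, 0 ≤ R x y) (hR1 : ∀ x, ∑ y, R x y = 1)
    (x : S) (s t : ℕ) :
    coverTail R x (t + s) ≤ coverTail R x s := by
  calc coverTail R x (t + s)
      ≤ pathSum R x (t + s) (fun w =>
          (fun u : Fin (s+1) → S => ¬ ∀ v : S, ∃ i, u i = v)
            (fun i => w (Fin.castLE (by omega) i))) := by
        refine pathSum_mono R hR0 fun w hw hnc hc => hnc fun v => ?_
        obtain ⟨i, hi⟩ := hc v
        exact ⟨Fin.castLE (by omega) i, hi⟩
    _ = coverTail R x s := pathSum_prefix R hR1 x s t (fun u : Fin (s+1) → S => ¬ ∀ v : S, ∃ i, u i = v)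

lemma coverTail_submul (hR0 : ∀ x y, 0 ≤ R x y) (x : S) (s t : ℕ) :
    coverTail R x (t + s) ≤ coverTail R x s * Mc R t := by
  calc coverTail R x (t + s)
      ≤ pathSum R x (t + s) (fun w =>
          (fun u : Fin (s+1) → S => ¬ ∀ v : S, ∃ i, u i = v)
            (fun i => w (Fin.castLE (by omega) i)) ∧
          (fun u : Fin (t+1) → S => ¬ ∀ v : S, ∃ i, u i = v)
            (fun j => w (⟨s + j.1, by omega⟩ : Fin (t+s+1)))) := by
        refine pathSum_mono R hR0 fun w hw hnc => ?_
        constructor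
        · intro hc
          refine hnc fun v => ?_
          obtain ⟨i, hi⟩ := hc v
          exact ⟨_, hi⟩
        · intro hc
          refine hnc fun v => ?_
          obtain ⟨i, hi⟩ := hc v
          exact ⟨_, hi⟩
    _ = ∑ y, pathSum R x s (fun u => (¬ ∀ v : S, ∃ i, u i = v) ∧ u (Fin.last s) = y)
          * coverTail R y t :=
        pathSum_split R x s t (fun u : Fin (s+1) → S => ¬ ∀ v : S, ∃ i, u i = v)
          (fun u : Fin (t+1) → S => ¬ ∀ v : S, ∃ i, u i = v)
    _ ≤ ∑ y, pathSum R x s (fun u => (¬ ∀ v : S, ∃ i, u i = v) ∧ u (Fin.last s) = y)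
          * Mc R t := by
        refine Finset.sum_le_sum fun y _ => ?_
        exact mul_le_mul_of_nonneg_left (le_Mc R y t) (pathSum_nonneg R hR0 _ _ _)
    _ = coverTail R x s * Mc R t := by
        rw [← Finset.sum_mul, pathSum_sum_last]
        rfl

lemma Mc_geom (hR0 : ∀ x y, 0 ≤ R x y) (hR1 : ∀ x, ∑ y, R x y = 1)
    (t0 : ℕ) {θ : ℝ} (hθ : Mc R t0 ≤ θ) (hθ0 : 0 ≤ θ) (q r : ℕ) :
    Mc R (t0 * q + r) ≤ θ ^ q * Mc R r := by
  induction q with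
  | zero => simp
  | succ q ih =>
    have h : t0 * (q+1) + r = t0 + (t0 * q + r) := by ring
    rw [h]
    have h2 : Mc R (t0 + (t0 * q + r)) ≤ Mc R (t0 * q + r) * Mc R t0 :=
      Mc_le R fun y => le_trans (coverTail_submul R hR0 y (t0*q+r) t0)
        (mul_le_mul_of_nonneg_right (le_Mc R y _) (Mc_nonneg R hR0 t0))
    refine h2.trans ?_
    have h3 : Mc R (t0 * q + r) * Mc R t0 ≤ (θ ^ q * Mc R r) * θ :=
      mul_le_mul ih hθ (Mc_nonneg R hR0 t0)
        (mul_nonneg (pow_nonneg hθ0 q) (Mc_nonneg R hR0 r))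
    refine h3.trans ?_
    rw [pow_succ]
    ring_nf
    exact le_rfl

lemma Mc_div_bound (hR0 : ∀ x y, 0 ≤ R x y) (hR1 : ∀ x, ∑ y, R x y = 1)
    {t0 : ℕ} (ht0 : 0 < t0) {θ : ℝ} (hθ : Mc R t0 ≤ θ) (hθ0 : 0 ≤ θ) (t : ℕ) :
    Mc R t ≤ θ ^ (t / t0) := by
  have h : t0 * (t / t0) + t % t0 = t := Nat.div_add_mod t t0
  calc Mc R t = Mc R (t0 * (t / t0) + t % t0) := by rw [h]
    _ ≤ θ ^ (t / t0) * Mc R (t % t0) := Mc_geom R hR0 hR1 t0 hθ hθ0 _ _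
    _ ≤ θ ^ (t / t0) * 1 :=
        mul_le_mul_of_nonneg_left (Mc_le_one R hR0 hR1 _) (pow_nonneg hθ0 _)
    _ = θ ^ (t / t0) := mul_one _

end Cover

lemma block_sum {θ : ℝ} (hθ0 : 0 ≤ θ) (hθ1 : θ < 1) {t0 : ℕ} (ht0 : 0 < t0) (N : ℕ) :
    ∑ t ∈ Finset.range N, θ ^ (t / t0) ≤ (t0 : ℝ) * (1 - θ)⁻¹ := by
  have key : ∀ M : ℕ, ∑ t ∈ Finset.range (t0 * M), θ ^ (t / t0)
      = (t0 : ℝ) * ∑ n ∈ Finset.range M, θ ^ n := by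
    intro M
    induction M with
    | zero => simp
    | succ M ih =>
      rw [Finset.range_eq_Ico] at ih ⊢
      rw [← Finset.sum_Ico_consecutive _ (Nat.zero_le (t0 * M))
          (Nat.mul_le_mul_left t0 (Nat.le_succ M)), ih]
      have hdiv : ∀ t ∈ Finset.Ico (t0 * M) (t0 * (M+1)), θ ^ (t / t0) = θ ^ M := by
        intro t ht
        rw [Finset.mem_Ico] at ht
        have hd : t / t0 = M := Nat.div_eq_of_lt_le
          (by rw [Nat.mul_comm]; exact ht.1) (by rw [Nat.mul_comm]; exact ht.2)
        rw [hd]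
      have hcard : t0 * (M+1) - t0 * M = t0 := by
        have h : t0 * (M+1) = t0 * M + t0 := Nat.mul_succ t0 M
        omega
      rw [Finset.sum_congr rfl hdiv, Finset.sum_const, Nat.card_Ico, hcard,
        Finset.sum_range_succ, nsmul_eq_mul]
      ring
  calc ∑ t ∈ Finset.range N, θ ^ (t / t0)
      ≤ ∑ t ∈ Finset.range (t0 * N), θ ^ (t / t0) := by
        refine Finset.sum_le_sum_of_subset_of_nonneg ?_ (fun t _ _ => pow_nonneg hθ0 _)
        exact Finset.range_subset_range.2 (Nat.le_mul_of_pos_left N ht0)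
    _ = (t0 : ℝ) * ∑ n ∈ Finset.range N, θ ^ n := key N
    _ ≤ (t0 : ℝ) * (1 - θ)⁻¹ := by
        refine mul_le_mul_of_nonneg_left ?_ (Nat.cast_nonneg t0)
        have hne : θ ≠ 1 := ne_of_lt hθ1
        rw [geom_sum_eq hne, div_le_iff_of_neg (by linarith : θ - 1 < 0)]
        have hp : (0:ℝ) ≤ θ ^ N := pow_nonneg hθ0 N
        have hm : (1 - θ)⁻¹ * (θ - 1) = -1 := by
          have h1θ : (1:ℝ) - θ ≠ 0 := by linarith
          field_simp
          ring
        linarith [hm, hp]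

section Chain

variable {S : Type*} [Fintype S] (R : S → S → ℝ)

lemma pathSum_last_eq_pow [DecidableEq S] (x y : S) (n : ℕ) :
    pathSum R x n (fun w => w (Fin.last n) = y) = ((Matrix.of R) ^ n) x y := by
  induction n generalizing x with
  | zero =>
    rw [pathSum_zero]
    by_cases h : x = y <;> simp [Matrix.one_apply, h]
  | succ n ih =>
    rw [pathSum_succ, pow_succ', Matrix.mul_apply]
    refine Finset.sum_congr rfl fun z _ => ?_
    exact congrArg (R x z * ·)
      ((pathSum_congr R fun w hw => by rw [← Fin.succ_last, Fin.cons_succ]).trans (ih z))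

lemma pathSum_hit_mono (hR0 : ∀ x y, 0 ≤ R x y) (hR1 : ∀ x, ∑ y, R x y = 1)
    (x y : S) (s t : ℕ) :
    pathSum R x s (fun u => ∃ i, u i = y) ≤ pathSum R x (t + s) (fun w => ∃ i, w i = y) := by
  rw [← pathSum_prefix R hR1 x s t (fun u : Fin (s+1) → S => ∃ i, u i = y)]
  refine pathSum_mono R hR0 fun w hw h => ?_
  obtain ⟨i, hi⟩ := h
  exact ⟨_, hi⟩

lemma cover_chain (hR0 : ∀ x y, 0 ≤ R x y) (N : ℕ) {δ : ℝ} (hδ0 : 0 ≤ δ)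
    (hδ : ∀ x y, δ ≤ pathSum R x N (fun w => ∃ i, w i = y)) :
    ∀ (l : List S) (x : S),
      δ ^ l.length ≤ pathSum R x (N * l.length) (fun w => ∀ v ∈ l, ∃ i, w i = v) := by
  intro l
  induction l with
  | nil =>
    intro x
    show δ ^ 0 ≤ pathSum R x 0 (fun w : Fin 1 → S => ∀ v ∈ ([] : List S), ∃ i, w i = v)
    rw [pathSum_zero]
    simp
  | cons v l ih =>
    intro x
    have h1 : δ ^ (l.length + 1) = δ * δ ^ l.length := by rw [pow_succ]; ring
    show δ ^ (l.length + 1) ≤ _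
    rw [h1]
    calc δ * δ ^ l.length
        ≤ pathSum R x N (fun u => ∃ i, u i = v) * δ ^ l.length :=
          mul_le_mul_of_nonneg_right (hδ x v) (pow_nonneg hδ0 _)
      _ = (∑ y, pathSum R x N (fun u => (∃ i, u i = v) ∧ u (Fin.last N) = y))
            * δ ^ l.length := by rw [pathSum_sum_last]
      _ = ∑ y, pathSum R x N (fun u => (∃ i, u i = v) ∧ u (Fin.last N) = y)
            * δ ^ l.length := by rw [Finset.sum_mul]
      _ ≤ ∑ y, pathSum R x N (fun u => (∃ i, u i = v) ∧ u (Fin.last N) = y)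
            * pathSum R y (N * l.length) (fun u => ∀ v' ∈ l, ∃ i, u i = v') :=
          Finset.sum_le_sum fun y _ =>
            mul_le_mul_of_nonneg_left (ih y) (pathSum_nonneg R hR0 _ _ _)
      _ = pathSum R x (N * l.length + N) (fun w =>
            (fun u : Fin (N+1) → S => ∃ i, u i = v)
              (fun i => w (Fin.castLE (by omega) i)) ∧
            (fun u : Fin (N*l.length+1) → S => ∀ v' ∈ l, ∃ i, u i = v')
              (fun j => w (⟨N + j.1, by omega⟩ : Fin (N*l.length + N + 1)))) :=
          (pathSum_split R x N (N*l.length)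
            (fun u : Fin (N+1) → S => ∃ i, u i = v)
            (fun u : Fin (N*l.length+1) → S => ∀ v' ∈ l, ∃ i, u i = v')).symm
      _ ≤ pathSum R x (N * (v::l).length) (fun w => ∀ v' ∈ v::l, ∃ i, w i = v') := by
          refine pathSum_mono R hR0 fun w hw h => ?_
          intro v' hv'
          rcases List.mem_cons.1 hv' with rfl | hm
          · obtain ⟨i, hi⟩ := h.1
            exact ⟨_, hi⟩
          · obtain ⟨j, hj⟩ := h.2 v' hm
            exact ⟨_, hj⟩

lemma coverTail_markov [Nonempty S] (hR0 : ∀ x y, 0 ≤ R x y)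
    (hR1 : ∀ x, ∑ y, R x y = 1) (x : S) (hsum : Summable (coverTail R x)) (t : ℕ) :
    ((t:ℝ)+1) * coverTail R x t ≤ ∑' s, coverTail R x s := by
  have hmono : ∀ s ∈ Finset.range (t+1), coverTail R x t ≤ coverTail R x s := by
    intro s hs
    rw [Finset.mem_range] at hs
    obtain ⟨d, hd⟩ : ∃ d, t = d + s := ⟨t - s, by omega⟩
    rw [hd]
    exact coverTail_mono R hR0 hR1 x s d
  calc ((t:ℝ)+1) * coverTail R x t
      = ∑ _s ∈ Finset.range (t+1), coverTail R x t := by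
        rw [Finset.sum_const, Finset.card_range, nsmul_eq_mul]
        push_cast
        ring
    _ ≤ ∑ s ∈ Finset.range (t+1), coverTail R x s := Finset.sum_le_sum hmono
    _ ≤ ∑' s, coverTail R x s :=
        Summable.sum_le_tsum _ (fun i _ => coverTail_nonneg R hR0 x i) hsum

end Chain

section Qlemmas

variable {V : Type*} [Fintype V] [Nonempty V] (P : V → V → ℝ) (π : V → ℝ) (lam : ℝ)
variable (hP0 : ∀ x y, 0 ≤ P x y) (hP1 : ∀ x, ∑ y, P x y = 1)
variable (hpi0 : ∀ x, 0 < π x) (hpi1 : ∑ x, π x = 1)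
variable (hl0 : 0 < lam) (hl1 : lam < 1)

lemma Plam_nonneg (hP0 : ∀ x y, 0 ≤ P x y) (hpi0 : ∀ x, 0 < π x)
    (hl0 : 0 < lam) (hl1 : lam < 1) (a b : Option V) : 0 ≤ Plam P π lam a b := by
  match a, b with
  | some x, some y => exact mul_nonneg (by linarith) (hP0 x y)
  | some _, none => exact hl0.le
  | none, some y => exact (hpi0 y).le
  | none, none => exact le_rfl

lemma Plam_rowsum (hP1 : ∀ x, ∑ y, P x y = 1) (hpi1 : ∑ x, π x = 1) (a : Option V) :
    ∑ b, Plam P π lam a b = 1 := by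
  match a with
  | some x =>
    rw [Fintype.sum_option]
    show lam + ∑ y, (1 - lam) * P x y = 1
    rw [← Finset.mul_sum, hP1 x]
    ring
  | none =>
    rw [Fintype.sum_option]
    show (0:ℝ) + ∑ y, π y = 1
    rw [hpi1]
    ring

lemma avoid_none (hP0 : ∀ x y, 0 ≤ P x y) (hP1 : ∀ x, ∑ y, P x y = 1)
    (hpi0 : ∀ x, 0 < π x) (hl0 : 0 < lam) (hl1 : lam < 1) :
    ∀ (t : ℕ) (v : V), pathSum (Plam P π lam) (some v) t (fun w => ∀ i, w i ≠ none)
      ≤ (1 - lam) ^ t := by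
  intro t
  induction t with
  | zero =>
    intro v
    rw [pathSum_zero]
    split_ifs <;> norm_num
  | succ t ih =>
    intro v
    rw [pathSum_succ, Fintype.sum_option]
    have hnone : pathSum (Plam P π lam) none t
        (fun w => ∀ i, (Fin.cons (some v) w : Fin (t+2) → Option V) i ≠ none) = 0 := by
      refine pathSum_false _ none t fun w hw hA => ?_
      have := hA ((0 : Fin (t+1)).succ)
      rw [Fin.cons_succ, hw] at this
      exact this rfl
    rw [hnone, mul_zero, zero_add]
    have hterm : ∀ z : V, Plam P π lam (some v) (some z) * pathSum (Plam P π lam)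
        (some z) t (fun w => ∀ i, (Fin.cons (some v) w : Fin (t+2) → Option V) i ≠ none)
        ≤ (1 - lam) * P v z * (1 - lam) ^ t := by
      intro z
      show (1 - lam) * P v z * _ ≤ _
      refine mul_le_mul_of_nonneg_left ?_
        (mul_nonneg (by linarith) (hP0 v z))
      refine le_trans (pathSum_mono _ (Plam_nonneg P π lam hP0 hpi0 hl0 hl1)
        (fun w hw hA i => ?_) ) (ih z)
      have := hA i.succ
      rwa [Fin.cons_succ] at this
    calc ∑ z : V, Plam P π lam (some v) (some z) * pathSum (Plam P π lam)
          (some z) t (fun w => ∀ i, (Fin.cons (some v) w : Fin (t+2) → Option V) i ≠ none)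
        ≤ ∑ z : V, (1 - lam) * P v z * (1 - lam) ^ t :=
          Finset.sum_le_sum fun z _ => hterm z
      _ = (1 - lam) ^ (t+1) := by
          rw [← Finset.sum_mul, ← Finset.mul_sum, hP1 v]
          ring

open Classical in
lemma stayV (hl1 : lam < 1) (m : ℕ) (v : V) (B : (Fin (m+1) → V) → Prop) :
    pathSum (Plam P π lam) (some v) m
      (fun w => ∃ u : Fin (m+1) → V, (∀ i, w i = some (u i)) ∧ B u)
      = (1 - lam) ^ m * pathSum P v m B := by
  classical
  unfold pathSum
  have hJinj : Function.Injective (fun (u : Fin (m+1) → V) (i : Fin (m+1)) => some (u i)) := by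
    intro u u' h
    funext i
    have := congrFun h i
    exact Option.some_injective V this
  rw [← Finset.sum_subset (Finset.subset_univ (Finset.univ.image
      (fun (u : Fin (m+1) → V) (i : Fin (m+1)) => some (u i))))
      (fun w _ hw => ?_), Finset.sum_image (fun u _ u' _ h => hJinj h)]
  · rw [Finset.mul_sum]
    refine Finset.sum_congr rfl fun u _ => ?_
    by_cases h : u 0 = v ∧ B u
    · have hcond : (fun i : Fin (m+1) => some (u i)) 0 = some v ∧
          ∃ u' : Fin (m+1) → V, (∀ i, (fun i : Fin (m+1) => some (u i)) i = some (u' i)) ∧ B u' := by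
        exact ⟨by simp [h.1], u, fun i => rfl, h.2⟩
      rw [if_pos hcond, if_pos h]
      have hprod : (∏ i : Fin m, Plam P π lam (some (u i.castSucc)) (some (u i.succ)))
          = ∏ i : Fin m, (1 - lam) * P (u i.castSucc) (u i.succ) := rfl
      rw [hprod, Finset.prod_mul_distrib, Finset.prod_const, Finset.card_univ,
        Fintype.card_fin]
    · rw [if_neg h, mul_zero]
      refine if_neg fun c => h ?_
      obtain ⟨hc0, u', hu', hB⟩ := c
      have : u' = u := by
        funext i
        exact (Option.some_injective V (hu' i)).symm
      subst this
      exact ⟨Option.some_injective V hc0, hB⟩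
  · refine if_neg fun c => ?_
    obtain ⟨hc0, u, hu, hB⟩ := c
    refine hw ?_
    rw [Finset.mem_image]
    refine ⟨u, Finset.mem_univ u, ?_⟩
    funext i
    exact (hu i).symm

lemma cover_eq_one_sub {S : Type*} [Fintype S] (R : S → S → ℝ)
    (hR1 : ∀ x, ∑ y, R x y = 1) (x : S) (t : ℕ) :
    pathSum R x t (fun w => ∀ v : S, ∃ i, w i = v) = 1 - coverTail R x t := by
  have h := pathSum_compl R x t (fun w => ∀ v : S, ∃ i, w i = v)
  rw [pathSum_true R hR1] at h
  have h2 : coverTail R x t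
      = pathSum R x t (fun w => ¬ ∀ v : S, ∃ i, w i = v) := rfl
  linarith

lemma none_cover (hP0 : ∀ x y, 0 ≤ P x y) (hP1 : ∀ x, ∑ y, P x y = 1)
    (hpi0 : ∀ x, 0 < π x) (hpi1 : ∑ x, π x = 1)
    (hl0 : 0 < lam) (hl1 : lam < 1) (m : ℕ) :
    coverTail (Plam P π lam) none (m+1) ≤ 1 - (1-lam)^m * (1 - Mc P m) := by
  have hQ0 := Plam_nonneg P π lam hP0 hpi0 hl0 hl1
  have hQ1 := Plam_rowsum P π lam hP1 hpi1
  have hE : pathSum (Plam P π lam) none (m+1) (fun w => ∃ u : Fin (m+1) → V,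
        (∀ i : Fin (m+1), w i.succ = some (u i)) ∧ (∀ v : V, ∃ i, u i = v))
      ≤ pathSum (Plam P π lam) none (m+1)
        (fun w => ∀ s : Option V, ∃ i, w i = s) := by
    refine pathSum_mono _ hQ0 fun w hw h => ?_
    obtain ⟨u, hu, hcov⟩ := h
    intro s
    match s with
    | none => exact ⟨0, hw⟩
    | some v =>
      obtain ⟨i, hi⟩ := hcov v
      exact ⟨i.succ, by rw [hu i, hi]⟩
  have hrec := pathSum_succ (Plam P π lam) none m
    (fun w : Fin (m+2) → Option V => ∃ u : Fin (m+1) → V,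
        (∀ i : Fin (m+1), w i.succ = some (u i)) ∧ (∀ v : V, ∃ i, u i = v))
  have hterm : ∀ z : V, pathSum (Plam P π lam) (some z) m
      (fun w => ∃ u : Fin (m+1) → V,
        (∀ i : Fin (m+1), (Fin.cons none w : Fin (m+2) → Option V) i.succ = some (u i)) ∧
        (∀ v : V, ∃ i, u i = v))
      = (1-lam)^m * (1 - coverTail P z m) := by
    intro z
    rw [← cover_eq_one_sub P hP1 z m, ← stayV P π lam hl1 m z _]
    refine pathSum_congr _ fun w hw => ?_
    constructor
    · rintro ⟨u, hu, hc⟩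
      refine ⟨u, fun i => ?_, hc⟩
      have h3 := hu i
      rwa [Fin.cons_succ] at h3
    · rintro ⟨u, hu, hc⟩
      refine ⟨u, fun i => ?_, hc⟩
      rw [Fin.cons_succ]
      exact hu i
  have hlow : (1-lam)^m * (1 - Mc P m)
      ≤ pathSum (Plam P π lam) none (m+1) (fun w => ∃ u : Fin (m+1) → V,
        (∀ i : Fin (m+1), w i.succ = some (u i)) ∧ (∀ v : V, ∃ i, u i = v)) := by
    rw [hrec, Fintype.sum_option]
    have hz : Plam P π lam none none = 0 := rfl
    rw [hz, zero_mul, zero_add]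
    have : ∀ z : V, Plam P π lam none (some z) = π z := fun z => rfl
    calc (1-lam)^m * (1 - Mc P m)
        = ∑ z : V, π z * ((1-lam)^m * (1 - Mc P m)) := by
          rw [← Finset.sum_mul, hpi1, one_mul]
      _ ≤ ∑ z : V, π z * ((1-lam)^m * (1 - coverTail P z m)) := by
          refine Finset.sum_le_sum fun z _ => ?_
          refine mul_le_mul_of_nonneg_left ?_ (hpi0 z).le
          refine mul_le_mul_of_nonneg_left ?_ (pow_nonneg (by linarith) m)
          have := le_Mc P z m
          linarith
      _ = ∑ z : V, Plam P π lam none (some z) * pathSum (Plam P π lam) (some z) m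
            (fun w => ∃ u : Fin (m+1) → V,
              (∀ i : Fin (m+1), (Fin.cons none w : Fin (m+2) → Option V) i.succ = some (u i)) ∧
              (∀ v : V, ∃ i, u i = v)) := by
          refine Finset.sum_congr rfl fun z _ => ?_
          rw [this z, hterm z]
  have hfinal := le_trans hlow hE
  rw [cover_eq_one_sub _ hQ1] at hfinal
  linarith

end Qlemmas

lemma escape {S : Type*} [Fintype S] [Nonempty S] (R : S → S → ℝ)
    (hR0 : ∀ x y, 0 ≤ R x y) (hR1 : ∀ x, ∑ y, R x y = 1) (o : S) (m : ℕ) :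
    ∀ (s1 : ℕ) (x : S), coverTail R x ((m+1) + s1)
      ≤ pathSum R x s1 (fun u => ∀ j, u j ≠ o) + coverTail R o (m+1) := by
  intro s1
  induction s1 with
  | zero =>
    intro x
    by_cases hx : x = o
    · subst hx
      have h1 : pathSum R x 0 (fun u : Fin 1 → S => ∀ j, u j ≠ x) = 0 :=
        pathSum_false R x 0 fun w hw hA => hA 0 hw
      rw [h1, zero_add]
    · have h1 : pathSum R x 0 (fun u : Fin 1 → S => ∀ j, u j ≠ o) = 1 := by
        rw [pathSum_zero, if_pos (fun j => hx)]
      rw [h1]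
      have := coverTail_le_one R hR0 hR1 x ((m+1) + 0)
      have h2 := coverTail_nonneg R hR0 o (m+1)
      linarith
  | succ s1 ih =>
    intro x
    by_cases hx : x = o
    · subst hx
      have h1 : coverTail R x ((s1+1) + (m+1)) ≤ coverTail R x (m+1) :=
        coverTail_mono R hR0 hR1 x (m+1) (s1+1)
      have heq : (m+1) + (s1+1) = (s1+1) + (m+1) := by omega
      rw [heq]
      have h2 := pathSum_nonneg R hR0 x (s1+1) (fun u => ∀ j, u j ≠ x)
      linarith
    · have hrec := pathSum_succ R x ((m+1)+s1)
        (fun w : Fin ((m+1)+s1+2) → S => ¬ ∀ v : S, ∃ i, w i = v)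
      have hLHS : coverTail R x ((m+1) + (s1+1))
          = ∑ y, R x y * pathSum R y ((m+1)+s1)
            (fun w => ¬ ∀ v : S, ∃ i, (Fin.cons x w : Fin ((m+1)+s1+2) → S) i = v) :=
        hrec
      rw [hLHS]
      have hterm : ∀ y : S, pathSum R y ((m+1)+s1)
          (fun w => ¬ ∀ v : S, ∃ i, (Fin.cons x w : Fin ((m+1)+s1+2) → S) i = v)
          ≤ pathSum R y s1 (fun u => ∀ j, u j ≠ o) + coverTail R o (m+1) := by
        intro y
        have hmono : pathSum R y ((m+1)+s1)
            (fun w => ¬ ∀ v : S, ∃ i, (Fin.cons x w : Fin ((m+1)+s1+2) → S) i = v)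
            ≤ coverTail R y ((m+1)+s1) :=
          pathSum_mono R hR0 fun w hw hnc hc => hnc fun v => by
            obtain ⟨i, hi⟩ := hc v
            exact ⟨i.succ, by rw [Fin.cons_succ]; exact hi⟩
        exact le_trans hmono (ih y)
      calc ∑ y, R x y * pathSum R y ((m+1)+s1)
            (fun w => ¬ ∀ v : S, ∃ i, (Fin.cons x w : Fin ((m+1)+s1+2) → S) i = v)
          ≤ ∑ y, R x y * (pathSum R y s1 (fun u => ∀ j, u j ≠ o) + coverTail R o (m+1)) :=
            Finset.sum_le_sum fun y _ =>
              mul_le_mul_of_nonneg_left (hterm y) (hR0 x y)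
        _ = (∑ y, R x y * pathSum R y s1 (fun u => ∀ j, u j ≠ o)) + coverTail R o (m+1) := by
            simp only [mul_add]
            rw [Finset.sum_add_distrib, ← Finset.sum_mul, hR1 x, one_mul]
        _ = pathSum R x (s1+1) (fun u => ∀ j, u j ≠ o) + coverTail R o (m+1) := by
            congr 1
            refine Eq.symm ((pathSum_succ R x s1 _).trans
              (Finset.sum_congr rfl fun y _ => congrArg (R x y * ·)
                (pathSum_congr R fun u hu => ?_)))
            constructor
            · intro h j
              have h2 := h j.succ
              rwa [Fin.cons_succ] at h2
            · intro h j
              refine Fin.cases ?_ (fun k => ?_) j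
              · rw [Fin.cons_zero]
                exact hx
              · rw [Fin.cons_succ]
                exact h k

lemma exp_neg_two_le : Real.exp (-2) ≤ 1/4 := by
  have h1 := Real.exp_one_gt_d9
  have h2 : Real.exp 2 = Real.exp 1 * Real.exp 1 := by
    rw [← Real.exp_add]
    norm_num
  have h4 : (4:ℝ) ≤ Real.exp 2 := by nlinarith
  rw [Real.exp_neg]
  rw [show ((1:ℝ)/4) = 4⁻¹ by norm_num]
  exact inv_anti₀ (by norm_num) h4

section Numerics

variable {V : Type*} [Fintype V] [Nonempty V] (P : V → V → ℝ) (π : V → ℝ) (lam : ℝ)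

lemma quarter1 (hP0 : ∀ x y, 0 ≤ P x y) (hP1 : ∀ x, ∑ y, P x y = 1)
    (hpi0 : ∀ x, 0 < π x) (hl0 : 0 < lam) (hl1 : lam < 1)
    {s1 : ℕ} (hs1 : 2/lam ≤ s1) (a : Option V) :
    pathSum (Plam P π lam) a s1 (fun u => ∀ j, u j ≠ none) ≤ 1/4 := by
  match a with
  | none =>
    rw [pathSum_false _ none s1 (fun w hw hA => hA 0 hw)]
    norm_num
  | some v =>
    refine le_trans (avoid_none P π lam hP0 hP1 hpi0 hl0 hl1 s1 v) ?_
    have hle : (1 - lam) ≤ Real.exp (-lam) := by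
      have := Real.add_one_le_exp (-lam)
      linarith
    calc (1 - lam)^s1 ≤ (Real.exp (-lam))^s1 :=
          pow_le_pow_left₀ (by linarith) hle s1
      _ = Real.exp (s1 * (-lam)) := by rw [← Real.exp_nat_mul]
      _ ≤ Real.exp (-2) := by
          refine Real.exp_le_exp.2 ?_
          have h2 : 2 ≤ lam * s1 := by
            rw [div_le_iff₀ hl0] at hs1
            linarith [hs1]
          nlinarith
      _ ≤ 1/4 := exp_neg_two_le

lemma quarter2 (hP0 : ∀ x y, 0 ≤ P x y) (hP1 : ∀ x, ∑ y, P x y = 1)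
    (hpi0 : ∀ x, 0 < π x) (hpi1 : ∑ x, π x = 1)
    (hl0 : 0 < lam) (hl1 : lam < 1) {m : ℕ}
    (hMcm : Mc P m ≤ 1/10) (hmlam : (m:ℝ) * lam ≤ 0.11) :
    coverTail (Plam P π lam) none (m+1) ≤ 1/4 := by
  refine le_trans (none_cover P π lam hP0 hP1 hpi0 hpi1 hl0 hl1 m) ?_
  have hbern : 1 - (m:ℝ)*lam ≤ (1-lam)^m := by
    have := one_add_mul_le_pow (a := -lam) (by linarith) m
    calc 1 - (m:ℝ)*lam = 1 + m * (-lam) := by ring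
      _ ≤ (1 + (-lam))^m := this
      _ = (1-lam)^m := by ring_nf
  have hA1 : (1-lam)^m ≤ 1 := pow_le_one₀ (by linarith) (by linarith)
  have hA0 : (0:ℝ) ≤ (1-lam)^m := pow_nonneg (by linarith) m
  have hB0 : 0 ≤ 1 - Mc P m := by
    have := Mc_le_one P hP0 hP1 m
    linarith
  nlinarith [hbern, hMcm, hmlam, hB0, hA0]

end Numerics

lemma expCov_le_block {S : Type*} [Fintype S] [Nonempty S] (R : S → S → ℝ)
    (hR0 : ∀ x y, 0 ≤ R x y) (hR1 : ∀ x, ∑ y, R x y = 1)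
    {t0 : ℕ} (ht0 : 0 < t0) {θ : ℝ} (hθ0 : 0 ≤ θ) (hθ1 : θ < 1)
    (hMc : Mc R t0 ≤ θ) (x : S) :
    Summable (coverTail R x) ∧ ∑' t, coverTail R x t ≤ (t0:ℝ) * (1-θ)⁻¹ := by
  have hb : ∀ t, coverTail R x t ≤ θ^(t/t0) := fun t =>
    le_trans (le_Mc R x t) (Mc_div_bound R hR0 hR1 ht0 hMc hθ0 t)
  have hpart : ∀ N, ∑ t ∈ Finset.range N, coverTail R x t ≤ (t0:ℝ) * (1-θ)⁻¹ :=
    fun N => le_trans (Finset.sum_le_sum fun t _ => hb t) (block_sum hθ0 hθ1 ht0 N)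
  have hsum := summable_of_sum_range_le (fun t => coverTail_nonneg R hR0 x t) hpart
  exact ⟨hsum, Summable.tsum_le_of_sum_range_le hsum hpart⟩

/-- There is a universal constant `C` such that for any finite irreducible
reversible chain `P`, if `1/λ ≥ 100·t_cov`, then the expected cover time `t_cov^λ` of the
auxiliary chain `P^λ` on `V ∪ {∂}` satisfies `t_cov^λ ≤ C/λ`. -/
theorem aux_cover_time_bound :
    ∃ C : ℝ, 0 < C ∧
      ∀ (V : Type) [Fintype V] [DecidableEq V] [Nonempty V]
        (P : V → V → ℝ) (π : V → ℝ),
        (∀ x y, 0 ≤ P x y) → (∀ x, ∑ y, P x y = 1) →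
        (∀ x y, ∃ n : ℕ, 0 < (Matrix.of P ^ n) x y) →
        (∀ x, 0 < π x) → (∑ x, π x = 1) →
        (∀ x y, π x * P x y = π y * P y x) →
        ∀ lam : ℝ, 0 < lam → lam < 1 → 100 * tcov P ≤ 1 / lam →
          tcov (Plam P π lam) ≤ C / lam := by
  classical
  refine ⟨100, by norm_num, ?_⟩
  intro V _ _ _ P π hP0 hP1 hirr hpi0 hpi1 hrev lam hl0 hl1 hcov
  obtain ⟨v0⟩ := ‹Nonempty V›
  have hQ0 := Plam_nonneg P π lam hP0 hpi0 hl0 hl1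
  have hQ1 := Plam_rowsum P π lam hP1 hpi1
  -- irreducibility data
  have hnf : ∀ x y : V, 0 < (Matrix.of P ^ ((hirr x y).choose)) x y :=
    fun x y => (hirr x y).choose_spec
  set N := Finset.univ.sup (fun p : V × V => (hirr p.1 p.2).choose) with hN
  have hhit : ∀ x y : V, 0 < pathSum P x N (fun w => ∃ i, w i = y) := by
    intro x y
    have hle : (hirr x y).choose ≤ N :=
      Finset.le_sup (f := fun p : V × V => (hirr p.1 p.2).choose) (Finset.mem_univ (x,y))
    have h1 : 0 < pathSum P x ((hirr x y).choose) (fun w => w (Fin.last _) = y) := by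
      rw [pathSum_last_eq_pow]
      exact hnf x y
    have h2 : pathSum P x ((hirr x y).choose) (fun w => w (Fin.last _) = y)
        ≤ pathSum P x ((hirr x y).choose) (fun w => ∃ i, w i = y) :=
      pathSum_mono P hP0 fun w hw h => ⟨_, h⟩
    have h3 := pathSum_hit_mono P hP0 hP1 x y ((hirr x y).choose) (N - (hirr x y).choose)
    have h4 : N - (hirr x y).choose + (hirr x y).choose = N := by omega
    rw [h4] at h3
    linarith
  set g : V × V → ℝ := fun p => pathSum P p.1 N (fun w => ∃ i, w i = p.2) with hg
  set δ : ℝ := Finset.univ.inf' ⟨(v0,v0), Finset.mem_univ _⟩ g with hδdef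
  have hδ0 : 0 < δ := by
    rw [hδdef]; refine (Finset.lt_inf'_iff _).2 ?_
    intro p _
    exact hhit p.1 p.2
  have hδle : ∀ x y : V, δ ≤ pathSum P x N (fun w => ∃ i, w i = y) :=
    fun x y => Finset.inf'_le g (Finset.mem_univ (x,y))
  set l := (Finset.univ : Finset V).toList with hl
  set K := N * l.length with hK
  have hcover : ∀ x : V, δ ^ l.length ≤ pathSum P x K (fun w => ∀ v : V, ∃ i, w i = v) := by
    intro x
    refine le_trans (cover_chain P hP0 N hδ0.le hδle l x)
      (pathSum_mono P hP0 fun w hw h v => h v ?_)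
    rw [hl]
    exact Finset.mem_toList.2 (Finset.mem_univ v)
  set ε := δ ^ l.length with hε
  have hε0 : 0 < ε := pow_pos hδ0 _
  have hε1 : ε ≤ 1 := le_trans (hcover v0) (pathSum_le_one P hP0 hP1 v0 K _)
  have hMcP : Mc P (K+1) ≤ 1 - ε := by
    refine Mc_le P fun y => ?_
    have h1 : coverTail P y (1 + K) ≤ coverTail P y K :=
      coverTail_mono P hP0 hP1 y K 1
    have h2 : coverTail P y K ≤ 1 - ε := by
      have h3 := hcover y
      have hc := cover_eq_one_sub P hP1 y K
      linarith
    rw [show K + 1 = 1 + K by omega]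
    linarith
  have hPblock := fun x => expCov_le_block P hP0 hP1 (Nat.succ_pos K)
    (by linarith : (0:ℝ) ≤ 1 - ε) (by linarith : 1 - ε < 1) hMcP x
  have hPsummable : ∀ x : V, Summable (coverTail P x) := fun x => (hPblock x).1
  have hMarkov : ∀ t : ℕ, Mc P t ≤ tcov P / ((t:ℝ)+1) := by
    intro t
    refine Mc_le P fun y => ?_
    have h1 := coverTail_markov P hP0 hP1 y (hPsummable y) t
    have h2 : expCov P y ≤ tcov P := by
      unfold tcov
      exact le_ciSup (f := fun x : V => expCov P x)
        (Set.Finite.bddAbove (Set.finite_range _)) y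
    have ht1 : (0:ℝ) < (t:ℝ)+1 := by positivity
    rw [le_div_iff₀ ht1]
    calc coverTail P y t * ((t:ℝ)+1) = ((t:ℝ)+1) * coverTail P y t := by ring
      _ ≤ ∑' s, coverTail P y s := h1
      _ ≤ tcov P := h2
  by_cases hsing : ∀ a b : V, a = b
  · -- |V| = 1
    have hsome : ∀ (v : V) (t : ℕ),
        coverTail (Plam P π lam) (some v) t ≤ (1-lam)^t := by
      intro v t
      refine le_trans (pathSum_mono _ hQ0 fun w hw hnc i hin => ?_)
        (avoid_none P π lam hP0 hP1 hpi0 hl0 hl1 t v)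
      refine hnc fun s => ?_
      match s with
      | none => exact ⟨i, hin⟩
      | some v' => exact ⟨0, by rw [hw]; exact congrArg some (hsing v v')⟩
    have hnoneS : ∀ t, coverTail (Plam P π lam) none (t+1) = 0 := by
      intro t
      have hrec : coverTail (Plam P π lam) none (t+1)
          = ∑ y, Plam P π lam none y * pathSum (Plam P π lam) y t
            (fun w => ¬ ∀ s : Option V, ∃ i, (Fin.cons none w : Fin (t+2) → Option V) i = s) :=
        pathSum_succ (Plam P π lam) none t _
      rw [hrec, Fintype.sum_option]
      have hz : Plam P π lam none none = 0 := rfl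
      have hzz : ∀ z : V, pathSum (Plam P π lam) (some z) t
          (fun w => ¬ ∀ s : Option V, ∃ i, (Fin.cons none w : Fin (t+2) → Option V) i = s)
          = 0 := by
        intro z
        refine pathSum_false _ (some z) t fun w hw hnc => hnc fun s => ?_
        match s with
        | none => exact ⟨0, rfl⟩
        | some v' =>
          exact ⟨(0 : Fin (t+1)).succ, by
            rw [Fin.cons_succ, hw]
            exact congrArg some (hsing z v')⟩
      rw [hz, zero_mul, zero_add]
      refine Finset.sum_eq_zero fun z _ => ?_
      rw [hzz z, mul_zero]
    have hgeo : Summable (fun t : ℕ => (1-lam)^t) :=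
      summable_geometric_of_lt_one (by linarith) (by linarith)
    have hsum_some : ∀ v : V, Summable (coverTail (Plam P π lam) (some v)) :=
      fun v => Summable.of_nonneg_of_le
        (fun t => coverTail_nonneg _ hQ0 _ t) (hsome v) hgeo
    refine ciSup_le fun a => ?_
    match a with
    | some v =>
      have h1 : expCov (Plam P π lam) (some v) ≤ ∑' t : ℕ, (1-lam)^t :=
        Summable.tsum_le_tsum (hsome v) (hsum_some v) hgeo
      rw [tsum_geometric_of_lt_one (by linarith) (by linarith)] at h1
      have h2 : (1 - (1-lam))⁻¹ = lam⁻¹ := by ring_nf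
      rw [h2] at h1
      refine h1.trans ?_
      rw [div_eq_mul_inv]
      nlinarith [inv_pos.2 hl0]
    | none =>
      have h1 : expCov (Plam P π lam) none = coverTail (Plam P π lam) none 0 := by
        unfold expCov
        refine tsum_eq_single 0 fun t ht => ?_
        match t with
        | 0 => exact absurd rfl ht
        | t+1 => exact hnoneS t
      rw [h1]
      have h2 := coverTail_le_one _ hQ0 hQ1 (none : Option V) 0
      have h3 : (1:ℝ) ≤ 100/lam := by
        rw [le_div_iff₀ hl0]
        linarith
      linarith
  · -- |V| ≥ 2
    push_neg at hsing
    obtain ⟨a, b, hab⟩ := hsing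
    have h1le : (1:ℝ) ≤ tcov P := by
      have hct : coverTail P a 0 = 1 := by
        show pathSum P a 0 (fun w => ¬ ∀ v : V, ∃ i, w i = v) = 1
        rw [pathSum_zero, if_pos]
        intro hall
        obtain ⟨i, hi⟩ := hall b
        exact hab hi
      have h1 : ∑ t ∈ Finset.range 1, coverTail P a t ≤ ∑' t, coverTail P a t :=
        Summable.sum_le_tsum _ (fun i _ => coverTail_nonneg P hP0 a i) (hPsummable a)
      rw [Finset.sum_range_one, hct] at h1
      refine h1.trans ?_
      exact le_ciSup (f := fun x : V => expCov P x)
        (Set.Finite.bddAbove (Set.finite_range _)) a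
    have hlam100 : lam ≤ 1/100 := by
      have h100 : (100:ℝ) ≤ 1/lam := le_trans (by linarith) hcov
      rw [le_div_iff₀ hl0] at h100
      linarith
    have htcovle : tcov P ≤ 1/(100*lam) := by
      have h1 : tcov P ≤ (1/lam)/100 := by linarith
      have h2 : (1/lam)/100 = 1/(100*lam) := by ring
      linarith
    set m := ⌈1/(10*lam)⌉₊ with hm
    set s1 := ⌈2/lam⌉₊ with hs1def
    have hm_ge : 1/(10*lam) ≤ (m:ℝ) := Nat.le_ceil _
    have hm_le : (m:ℝ) ≤ 1/(10*lam) + 1 :=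
      le_of_lt (Nat.ceil_lt_add_one (by positivity))
    have hs1_ge : 2/lam ≤ (s1:ℝ) := Nat.le_ceil _
    have hs1_le : (s1:ℝ) ≤ 2/lam + 1 :=
      le_of_lt (Nat.ceil_lt_add_one (by positivity))
    have hMcm : Mc P m ≤ 1/10 := by
      refine le_trans (hMarkov m) ?_
      have hm1 : 1/(10*lam) ≤ (m:ℝ)+1 := by linarith
      have hpos : (0:ℝ) < (m:ℝ)+1 := by positivity
      rw [div_le_iff₀ hpos]
      have heq : 1/(100*lam) = (1/10)*(1/(10*lam)) := by ring
      nlinarith [htcovle, hm1]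
    have hmlam : (m:ℝ) * lam ≤ 0.11 := by
      have h1 : (m:ℝ) * lam ≤ (1/(10*lam) + 1) * lam :=
        mul_le_mul_of_nonneg_right hm_le hl0.le
      have h2 : (1/(10*lam))*lam = 1/10 := by field_simp
      nlinarith [hlam100]
    have hMcQ : Mc (Plam P π lam) ((m+1) + s1) ≤ 1/2 := by
      refine Mc_le _ fun c => ?_
      have hesc := escape (Plam P π lam) hQ0 hQ1 none m s1 c
      have hq1 := quarter1 P π lam hP0 hP1 hpi0 hl0 hl1 hs1_ge c
      have hq2 := quarter2 P π lam hP0 hP1 hpi0 hpi1 hl0 hl1 hMcm hmlam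
      linarith
    have ht00 : 0 < (m+1) + s1 := by omega
    have hfin := fun c => expCov_le_block (Plam P π lam) hQ0 hQ1 ht00
      (by norm_num : (0:ℝ) ≤ 1/2) (by norm_num) hMcQ c
    refine ciSup_le fun c => ?_
    have h1 := (hfin c).2
    have hone : (1:ℝ) ≤ 1/lam := by
      rw [le_div_iff₀ hl0]
      linarith
    have ht0le : (((m+1) + s1 : ℕ):ℝ) ≤ 6/lam := by
      push_cast
      have heq1 : 1/(10*lam) = (1/10)*(1/lam) := by ring
      have heq2 : 2/lam = 2*(1/lam) := by ring
      have heq3 : 6/lam = 6*(1/lam) := by ring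
      nlinarith [hm_le, hs1_le, hone]
    calc expCov (Plam P π lam) c ≤ (((m+1) + s1 : ℕ):ℝ) * (1 - 1/2)⁻¹ := h1
      _ = 2 * (((m+1) + s1 : ℕ):ℝ) := by norm_num; ring
      _ ≤ 2 * (6/lam) := by linarith
      _ ≤ 100/lam := by
          have : 2 * (6/lam) = 12/lam := by ring
          rw [this]
          gcongr
          norm_num
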